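/- Let Ψ(x,z) = (e^{xz}/((x−2)xz))·[[ (x³z² − 2x²z² − 2x²z + 3xz + 2x − 2)/(xz), 1/x ],[ (xz−2)/z, x²z − 2xz − x + 1 ]]. Then [[0,0],[0,1]]·∂ₓ²Ψ + [[0, 1/((x−2)x²)],[−1/(x−2), 0]]·∂ₓΨ + [[−1/(x²(x−2)²), (x−1)/(x³(x−2)²)],[(2x−1)/(x(x−2)²), −(2x²−4x+3)/(x²(x−2)²)]]·Ψ = Ψ·[[0,0],[0,z²]] for all x with x ≠ 0, x ≠ 2, and all z ≠ 0. -/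

import Mathlib

open Matrix

noncomputable def Psi (x z : ℂ) : Matrix (Fin 2) (Fin 2) ℂ :=
  (Complex.exp (x * z) / ((x - 2) * x * z)) •
    !![(x ^ 3 * z ^ 2 - 2 * x ^ 2 * z ^ 2 - 2 * x ^ 2 * z + 3 * x * z + 2 * x - 2) / (x * z),
         x⁻¹;
       (x * z - 2) / z, x ^ 2 * z - 2 * x * z - x + 1]

set_option maxHeartbeats 1000000

lemma hasDerivAt_poly (a0 a1 a2 a3 a4 a5 a6 x : ℂ) :
    HasDerivAt (fun t : ℂ => a0 + a1*t + a2*t^2 + a3*t^3 + a4*t^4 + a5*t^5 + a6*t^6)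
      (a1 + 2*a2*x + 3*a3*x^2 + 4*a4*x^3 + 5*a5*x^4 + 6*a6*x^5) x := by
  have h := ((((((hasDerivAt_const x a0).add ((hasDerivAt_id x).const_mul a1)).add
      ((hasDerivAt_pow 2 x).const_mul a2)).add ((hasDerivAt_pow 3 x).const_mul a3)).add
      ((hasDerivAt_pow 4 x).const_mul a4)).add ((hasDerivAt_pow 5 x).const_mul a5)).add
      ((hasDerivAt_pow 6 x).const_mul a6)
  simp only [id_eq] at h
  refine h.congr_deriv ?_
  push_cast
  ring

lemma hasDerivAt_den1 (c x : ℂ) :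
    HasDerivAt (fun t : ℂ => (t-2)*t*c) ((x + (x-2))*c) x := by
  have h := (((hasDerivAt_id x).sub_const 2).mul (hasDerivAt_id x)).mul_const c
  simp only [id_eq] at h
  refine h.congr_deriv ?_
  ring

lemma hasDerivAt_den2 (c x : ℂ) :
    HasDerivAt (fun t : ℂ => (t-2)*t^2*c) ((x^2 + (x-2)*(2*x))*c) x := by
  have h := (((hasDerivAt_id x).sub_const 2).mul (hasDerivAt_pow 2 x)).mul_const c
  simp only [id_eq] at h
  refine h.congr_deriv ?_
  push_cast
  ring

lemma hasDerivAt_den3 (c x : ℂ) :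
    HasDerivAt (fun t : ℂ => (t-2)^2*t^2*c) ((2*(x-2)*x^2 + (x-2)^2*(2*x))*c) x := by
  have h := ((((hasDerivAt_id x).sub_const 2).pow 2).mul (hasDerivAt_pow 2 x)).mul_const c
  simp only [id_eq] at h
  refine h.congr_deriv ?_
  push_cast
  simp only [Pi.pow_apply]
  ring

lemma hasDerivAt_frac {z x n d Nx Dx : ℂ} {N D : ℂ → ℂ}
    (hN : HasDerivAt N n x) (hD : HasDerivAt D d x)
    (hNx : N x = Nx) (hDx : D x = Dx) (hD0 : Dx ≠ 0) :
    HasDerivAt (fun t => Complex.exp (t * z) * (N t / D t))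
      (Complex.exp (x * z) * ((z * Nx * Dx + n * Dx - Nx * d) / Dx ^ 2)) x := by
  subst hNx hDx
  have hD0' : D x ≠ 0 := hD0
  have hexp : HasDerivAt (fun t : ℂ => Complex.exp (t * z)) (Complex.exp (x * z) * z) x := by
    simpa using ((hasDerivAt_id x).mul_const z).cexp
  have h := hexp.mul (hN.div hD hD0')
  refine h.congr_deriv ?_
  have key : (z * N x * D x + n * D x - N x * d) / D x ^ 2
      = (z * N x) / D x + (n * D x - N x * d) / D x ^ 2 := by
    rw [div_add_div _ _ hD0' (pow_ne_zero 2 hD0'),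
      div_eq_div_iff (pow_ne_zero 2 hD0') (mul_ne_zero hD0' (pow_ne_zero 2 hD0'))]
    ring
  rw [Pi.div_apply]
  rw [key, div_eq_mul_inv, div_eq_mul_inv, div_eq_mul_inv]
  ring

lemma deriv_congr_U {f g : ℂ → ℂ} (h : ∀ s : ℂ, s ≠ 0 → s ≠ 2 → f s = g s)
    {x : ℂ} (hx0 : x ≠ 0) (hx2 : x ≠ 2) : deriv f x = deriv g x := by
  apply Filter.EventuallyEq.deriv_eq
  have hU : {s : ℂ | s ≠ 0 ∧ s ≠ 2} ∈ nhds x :=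
    IsOpen.mem_nhds (isOpen_ne.inter isOpen_ne) ⟨hx0, hx2⟩
  exact Filter.eventuallyEq_of_mem hU (fun s hs => h s hs.1 hs.2)

lemma T1 (b d E n : ℂ) : b⁻¹ * (E * (n / d)) = E * n / (d * b) := by
  rw [div_eq_mul_inv, div_eq_mul_inv, mul_inv]
  ring

lemma T2 (c m d E n : ℂ) : c / m * (E * (n / d)) = E * (c * n) / (m * d) := by
  rw [div_eq_mul_inv, div_eq_mul_inv, div_eq_mul_inv, mul_inv]
  ring

lemma T3 (d E n c : ℂ) : (E * (n / d)) * c = E * (n * c) / d := by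
  rw [div_eq_mul_inv, div_eq_mul_inv]
  ring

lemma T4 (E m n d : ℂ) : (E / m) * (n / d) = E * n / (m * d) := by
  rw [div_eq_mul_inv, div_eq_mul_inv, div_eq_mul_inv, mul_inv]
  ring

lemma v00 (z : ℂ) (hz : z ≠ 0) : ∀ s : ℂ, s ≠ 0 → s ≠ 2 → Psi s z 0 0 =
    Complex.exp (s * z) * (((-2) + (2 + 3*z)*s + (-2*z + -2*z^2)*s^2 + (1*z^2)*s^3 + (0)*s^4 + (0)*s^5 + (0)*s^6) / ((s-2)*s^2*z^2)) := by
  intro s h0 h2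
  have h2' : s - 2 ≠ 0 := sub_ne_zero.mpr h2
  have hD : (((s-2)*s^2*z^2) : ℂ) ≠ 0 := mul_ne_zero (mul_ne_zero h2' (pow_ne_zero 2 h0)) (pow_ne_zero 2 hz)
  · simp only [Psi, Matrix.smul_apply, smul_eq_mul, Matrix.cons_val', Matrix.cons_val_zero,
      Matrix.cons_val_one, Matrix.head_cons, Matrix.empty_val', Matrix.cons_val_fin_one,
      Matrix.head_fin_const, Matrix.of_apply]
    rw [T4, mul_div_assoc]
    congr 1
    rw [div_eq_div_iff (mul_ne_zero (mul_ne_zero (mul_ne_zero h2' h0) hz) (by exact mul_ne_zero h0 hz)) hD]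
    ring

lemma v01 (z : ℂ) (hz : z ≠ 0) : ∀ s : ℂ, s ≠ 0 → s ≠ 2 → Psi s z 0 1 =
    Complex.exp (s * z) * (((1) + (0)*s + (0)*s^2 + (0)*s^3 + (0)*s^4 + (0)*s^5 + (0)*s^6) / ((s-2)*s^2*z)) := by
  intro s h0 h2
  have h2' : s - 2 ≠ 0 := sub_ne_zero.mpr h2
  have hD : (((s-2)*s^2*z) : ℂ) ≠ 0 := mul_ne_zero (mul_ne_zero h2' (pow_ne_zero 2 h0)) hz
  · simp only [Psi, Matrix.smul_apply, smul_eq_mul, Matrix.cons_val', Matrix.cons_val_zero,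
      Matrix.cons_val_one, Matrix.head_cons, Matrix.empty_val', Matrix.cons_val_fin_one,
      Matrix.head_fin_const, Matrix.of_apply]
    rw [inv_eq_one_div]
    rw [T4, mul_div_assoc]
    congr 1
    rw [div_eq_div_iff (mul_ne_zero (mul_ne_zero (mul_ne_zero h2' h0) hz) (by exact h0)) hD]
    ring

lemma v10 (z : ℂ) (hz : z ≠ 0) : ∀ s : ℂ, s ≠ 0 → s ≠ 2 → Psi s z 1 0 =
    Complex.exp (s * z) * (((-2) + (1*z)*s + (0)*s^2 + (0)*s^3 + (0)*s^4 + (0)*s^5 + (0)*s^6) / ((s-2)*s*z^2)) := by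
  intro s h0 h2
  have h2' : s - 2 ≠ 0 := sub_ne_zero.mpr h2
  have hD : (((s-2)*s*z^2) : ℂ) ≠ 0 := mul_ne_zero (mul_ne_zero h2' h0) (pow_ne_zero 2 hz)
  · simp only [Psi, Matrix.smul_apply, smul_eq_mul, Matrix.cons_val', Matrix.cons_val_zero,
      Matrix.cons_val_one, Matrix.head_cons, Matrix.empty_val', Matrix.cons_val_fin_one,
      Matrix.head_fin_const, Matrix.of_apply]
    rw [T4, mul_div_assoc]
    congr 1
    rw [div_eq_div_iff (mul_ne_zero (mul_ne_zero (mul_ne_zero h2' h0) hz) (by exact hz)) hD]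
    ring

lemma v11 (z : ℂ) (hz : z ≠ 0) : ∀ s : ℂ, s ≠ 0 → s ≠ 2 → Psi s z 1 1 =
    Complex.exp (s * z) * (((1) + (-1 + -2*z)*s + (1*z)*s^2 + (0)*s^3 + (0)*s^4 + (0)*s^5 + (0)*s^6) / ((s-2)*s*z)) := by
  intro s h0 h2
  have h2' : s - 2 ≠ 0 := sub_ne_zero.mpr h2
  have hD : (((s-2)*s*z) : ℂ) ≠ 0 := mul_ne_zero (mul_ne_zero h2' h0) hz
  · simp only [Psi, Matrix.smul_apply, smul_eq_mul, Matrix.cons_val', Matrix.cons_val_zero,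
      Matrix.cons_val_one, Matrix.head_cons, Matrix.empty_val', Matrix.cons_val_fin_one,
      Matrix.head_fin_const, Matrix.of_apply]
    rw [div_mul_eq_mul_div, ← mul_div_assoc,
      div_eq_div_iff (mul_ne_zero (mul_ne_zero h2' h0) hz) hD]
    ring

lemma g00 (z : ℂ) (hz : z ≠ 0) : ∀ s : ℂ, s ≠ 0 → s ≠ 2 →
    deriv (fun t => Psi t z 0 0) s =
    Complex.exp (s * z) * (((-8) + (10 + 10*z)*s + (-4 + -12*z + -6*z^2)*s^2 + (4*z + 7*z^2 + 4*z^3)*s^3 + (-2*z^2 + -4*z^3)*s^4 + (1*z^3)*s^5 + (0)*s^6) / ((s-2)^2*s^3*z^2)) := by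
  intro s h0 h2
  have h2' : s - 2 ≠ 0 := sub_ne_zero.mpr h2
  have hD0 : ((s-2)*s^2*z^2 : ℂ) ≠ 0 :=
    mul_ne_zero (mul_ne_zero h2' (pow_ne_zero 2 h0)) (pow_ne_zero 2 hz)
  have hDg : (((s-2)^2*s^3*z^2) : ℂ) ≠ 0 :=
    mul_ne_zero (mul_ne_zero (pow_ne_zero 2 h2') (pow_ne_zero 3 h0)) (pow_ne_zero 2 hz)
  rw [deriv_congr_U (v00 z hz) h0 h2,
    (hasDerivAt_frac (z := z)
      (hasDerivAt_poly _ _ _ _ _ _ _ s) (hasDerivAt_den2 (z^2) s) rfl rfl hD0).deriv]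
  congr 1
  rw [div_eq_div_iff (pow_ne_zero 2 hD0) hDg]
  ring

lemma g01 (z : ℂ) (hz : z ≠ 0) : ∀ s : ℂ, s ≠ 0 → s ≠ 2 →
    deriv (fun t => Psi t z 0 1) s =
    Complex.exp (s * z) * (((4) + (-3 + -2*z)*s + (1*z)*s^2 + (0)*s^3 + (0)*s^4 + (0)*s^5 + (0)*s^6) / ((s-2)^2*s^3*z)) := by
  intro s h0 h2
  have h2' : s - 2 ≠ 0 := sub_ne_zero.mpr h2
  have hD0 : ((s-2)*s^2*z : ℂ) ≠ 0 :=
    mul_ne_zero (mul_ne_zero h2' (pow_ne_zero 2 h0)) hz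
  have hDg : (((s-2)^2*s^3*z) : ℂ) ≠ 0 :=
    mul_ne_zero (mul_ne_zero (pow_ne_zero 2 h2') (pow_ne_zero 3 h0)) hz
  rw [deriv_congr_U (v01 z hz) h0 h2,
    (hasDerivAt_frac (z := z)
      (hasDerivAt_poly _ _ _ _ _ _ _ s) (hasDerivAt_den2 z s) rfl rfl hD0).deriv]
  congr 1
  rw [div_eq_div_iff (pow_ne_zero 2 hD0) hDg]
  ring

lemma g10 (z : ℂ) (hz : z ≠ 0) : ∀ s : ℂ, s ≠ 0 → s ≠ 2 →
    deriv (fun t => Psi t z 1 0) s =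
    Complex.exp (s * z) * (((-4) + (4 + 4*z)*s + (-3*z + -2*z^2)*s^2 + (1*z^2)*s^3 + (0)*s^4 + (0)*s^5 + (0)*s^6) / ((s-2)^2*s^2*z^2)) := by
  intro s h0 h2
  have h2' : s - 2 ≠ 0 := sub_ne_zero.mpr h2
  have hD0 : ((s-2)*s*z^2 : ℂ) ≠ 0 :=
    mul_ne_zero (mul_ne_zero h2' h0) (pow_ne_zero 2 hz)
  have hDg : (((s-2)^2*s^2*z^2) : ℂ) ≠ 0 :=
    mul_ne_zero (mul_ne_zero (pow_ne_zero 2 h2') (pow_ne_zero 2 h0)) (pow_ne_zero 2 hz)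
  rw [deriv_congr_U (v10 z hz) h0 h2,
    (hasDerivAt_frac (z := z)
      (hasDerivAt_poly _ _ _ _ _ _ _ s) (hasDerivAt_den1 (z^2) s) rfl rfl hD0).deriv]
  congr 1
  rw [div_eq_div_iff (pow_ne_zero 2 hD0) hDg]
  ring

lemma g11 (z : ℂ) (hz : z ≠ 0) : ∀ s : ℂ, s ≠ 0 → s ≠ 2 →
    deriv (fun t => Psi t z 1 1) s =
    Complex.exp (s * z) * (((2) + (-2 + -2*z)*s + (1 + 3*z + 4*z^2)*s^2 + (-1*z + -4*z^2)*s^3 + (1*z^2)*s^4 + (0)*s^5 + (0)*s^6) / ((s-2)^2*s^2*z)) := by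
  intro s h0 h2
  have h2' : s - 2 ≠ 0 := sub_ne_zero.mpr h2
  have hD0 : ((s-2)*s*z : ℂ) ≠ 0 :=
    mul_ne_zero (mul_ne_zero h2' h0) hz
  have hDg : (((s-2)^2*s^2*z) : ℂ) ≠ 0 :=
    mul_ne_zero (mul_ne_zero (pow_ne_zero 2 h2') (pow_ne_zero 2 h0)) hz
  rw [deriv_congr_U (v11 z hz) h0 h2,
    (hasDerivAt_frac (z := z)
      (hasDerivAt_poly _ _ _ _ _ _ _ s) (hasDerivAt_den1 z s) rfl rfl hD0).deriv]
  congr 1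
  rw [div_eq_div_iff (pow_ne_zero 2 hD0) hDg]
  ring

lemma h10 (x z : ℂ) (hx0 : x ≠ 0) (hx2 : x ≠ 2) (hz : z ≠ 0) :
    iteratedDeriv 2 (fun t => Psi t z 1 0) x =
    Complex.exp (x * z) * (((-16) + (24 + 16*z)*x + (-12 + -24*z + -8*z^2)*x^2 + (10*z + 12*z^2 + 4*z^3)*x^3 + (-4*z^2 + -4*z^3)*x^4 + (1*z^3)*x^5 + (0)*x^6) / ((x-2)^3*x^3*z^2)) := by
  have hx2' : x - 2 ≠ 0 := sub_ne_zero.mpr hx2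
  have hD0 : ((x-2)^2*x^2*z^2 : ℂ) ≠ 0 :=
    mul_ne_zero (mul_ne_zero (pow_ne_zero 2 hx2') (pow_ne_zero 2 hx0)) (pow_ne_zero 2 hz)
  have hDh : (((x-2)^3*x^3*z^2) : ℂ) ≠ 0 :=
    mul_ne_zero (mul_ne_zero (pow_ne_zero 3 hx2') (pow_ne_zero 3 hx0)) (pow_ne_zero 2 hz)
  rw [iteratedDeriv_succ, iteratedDeriv_one, deriv_congr_U (g10 z hz) hx0 hx2,
    (hasDerivAt_frac (z := z)
      (hasDerivAt_poly _ _ _ _ _ _ _ x) (hasDerivAt_den3 (z^2) x) rfl rfl hD0).deriv]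
  congr 1
  rw [div_eq_div_iff (pow_ne_zero 2 hD0) hDh]
  ring

lemma h11 (x z : ℂ) (hx0 : x ≠ 0) (hx2 : x ≠ 2) (hz : z ≠ 0) :
    iteratedDeriv 2 (fun t => Psi t z 1 1) x =
    Complex.exp (x * z) * (((8) + (-12 + -8*z)*x + (6 + 12*z + 4*z^2)*x^2 + (-2 + -8*z + -8*z^2 + -8*z^3)*x^3 + (2*z + 5*z^2 + 12*z^3)*x^4 + (-1*z^2 + -6*z^3)*x^5 + (1*z^3)*x^6) / ((x-2)^3*x^3*z)) := by
  have hx2' : x - 2 ≠ 0 := sub_ne_zero.mpr hx2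
  have hD0 : ((x-2)^2*x^2*z : ℂ) ≠ 0 :=
    mul_ne_zero (mul_ne_zero (pow_ne_zero 2 hx2') (pow_ne_zero 2 hx0)) hz
  have hDh : (((x-2)^3*x^3*z) : ℂ) ≠ 0 :=
    mul_ne_zero (mul_ne_zero (pow_ne_zero 3 hx2') (pow_ne_zero 3 hx0)) hz
  rw [iteratedDeriv_succ, iteratedDeriv_one, deriv_congr_U (g11 z hz) hx0 hx2,
    (hasDerivAt_frac (z := z)
      (hasDerivAt_poly _ _ _ _ _ _ _ x) (hasDerivAt_den3 z x) rfl rfl hD0).deriv]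
  congr 1
  rw [div_eq_div_iff (pow_ne_zero 2 hD0) hDh]
  ring

set_option maxHeartbeats 4000000 in
theorem stmt9 (x z : ℂ) (hx0 : x ≠ 0) (hx2 : x ≠ 2) (hz : z ≠ 0) :
    !![(0 : ℂ), 0; 0, 1] * (Matrix.of fun i j => iteratedDeriv 2 (fun s => Psi s z i j) x)
      + !![0, ((x - 2) * x ^ 2)⁻¹; -(x - 2)⁻¹, 0]
        * (Matrix.of fun i j => deriv (fun s => Psi s z i j) x)
      + !![-(x ^ 2 * (x - 2) ^ 2)⁻¹, (x - 1) / (x ^ 3 * (x - 2) ^ 2);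
           (2 * x - 1) / (x * (x - 2) ^ 2), -(2 * x ^ 2 - 4 * x + 3) / (x ^ 2 * (x - 2) ^ 2)]
        * Psi x z
      = Psi x z * !![0, 0; 0, z ^ 2] := by
  have hx2' : x - 2 ≠ 0 := sub_ne_zero.mpr hx2
  ext i j
  fin_cases i <;> fin_cases j <;>
    simp only [Matrix.add_apply, Matrix.mul_apply, Fin.sum_univ_two, Matrix.of_apply,
      Matrix.cons_val', Matrix.cons_val_zero, Matrix.cons_val_one, Matrix.head_cons,
      Matrix.empty_val', Matrix.cons_val_fin_one, Matrix.head_fin_const, Fin.isValue, Fin.mk_zero, Fin.mk_one,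
      zero_mul, one_mul, mul_zero, mul_one, add_zero, zero_add, neg_mul] <;>
    simp only [g00 z hz x hx0 hx2, g01 z hz x hx0 hx2, g10 z hz x hx0 hx2, g11 z hz x hx0 hx2,
      h10 x z hx0 hx2 hz, h11 x z hx0 hx2 hz, v00 z hz x hx0 hx2, v01 z hz x hx0 hx2,
      v10 z hz x hx0 hx2, v11 z hz x hx0 hx2]
  all_goals simp only [inv_mul_eq_div, div_mul_eq_mul_div, ← mul_div_assoc, div_div, ← neg_div]
  · -- entry (0,0)
    rw [show ((x - 2) * x ^ 2 * ((x - 2) ^ 2 * x ^ 2 * z ^ 2) : ℂ) = (x-2)^3*x^4*z^2 from by ring,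
      show ((x ^ 2 * (x - 2) ^ 2 * ((x - 2) * x ^ 2 * z ^ 2)) : ℂ) = (x-2)^3*x^4*z^2 from by ring,
      show ((x ^ 3 * (x - 2) ^ 2 * ((x - 2) * x * z ^ 2)) : ℂ) = (x-2)^3*x^4*z^2 from by ring,
      ← add_div, ← add_div, div_eq_zero_iff]
    exact Or.inl (by ring)
  · -- entry (0,1)
    rw [show ((x - 2) * x ^ 2 * ((x - 2) ^ 2 * x ^ 2 * z) : ℂ) = (x-2)^3*x^4*z from by ring,
      show ((x ^ 2 * (x - 2) ^ 2 * ((x - 2) * x ^ 2 * z)) : ℂ) = (x-2)^3*x^4*z from by ring,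
      show ((x ^ 3 * (x - 2) ^ 2 * ((x - 2) * x * z)) : ℂ) = (x-2)^3*x^4*z from by ring,
      ← add_div, ← add_div,
      div_eq_div_iff
        (by exact mul_ne_zero (mul_ne_zero (pow_ne_zero 3 hx2') (pow_ne_zero 4 hx0)) hz)
        (by exact mul_ne_zero (mul_ne_zero hx2' (pow_ne_zero 2 hx0)) hz)]
    ring
  · -- entry (1,0)
    rw [show ((x - 2) * ((x - 2) ^ 2 * x ^ 3 * z ^ 2) : ℂ) = (x - 2) ^ 3 * x ^ 3 * z ^ 2 from by ring,
      show ((x * (x - 2) ^ 2 * ((x - 2) * x ^ 2 * z ^ 2)) : ℂ) = (x - 2) ^ 3 * x ^ 3 * z ^ 2 from by ring,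
      show ((x ^ 2 * (x - 2) ^ 2 * ((x - 2) * x * z ^ 2)) : ℂ) = (x - 2) ^ 3 * x ^ 3 * z ^ 2 from by ring,
      ← add_div, ← add_div, ← add_div, div_eq_zero_iff]
    exact Or.inl (by ring)
  · -- entry (1,1)
    rw [show ((x - 2) * ((x - 2) ^ 2 * x ^ 3 * z) : ℂ) = (x - 2) ^ 3 * x ^ 3 * z from by ring,
      show ((x * (x - 2) ^ 2 * ((x - 2) * x ^ 2 * z)) : ℂ) = (x - 2) ^ 3 * x ^ 3 * z from by ring,
      show ((x ^ 2 * (x - 2) ^ 2 * ((x - 2) * x * z)) : ℂ) = (x - 2) ^ 3 * x ^ 3 * z from by ring,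
      ← add_div, ← add_div, ← add_div,
      div_eq_div_iff
        (by exact mul_ne_zero (mul_ne_zero (pow_ne_zero 3 hx2') (pow_ne_zero 3 hx0)) hz)
        (by exact mul_ne_zero (mul_ne_zero hx2' hx0) hz)]
    ring
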